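/- Let m ≥ 1 be an integer and t_0, …, t_m be reals with 0 < t_0 ≤ t_1 ≤ ⋯ ≤ t_m. Let φ : ℕ → (0,∞) satisfy φ(n)/n → ∞ as n → ∞ and liminf_{n→∞} (log φ(n))/n = log b with 1 ≤ b < ∞, and let ε > 0. Define Φ(n) = min_{k≥n} φ(k) and a sequence {c_n} by: c_1 = ⋯ = c_m = 1, c_{m+1}^{t_m} = exp(Φ(1)), and c_{n+m}^{t_m} = min{ exp(Φ(n)) / (c_n^{t_0} c_{n+1}^{t_1} ⋯ c_{n+m−1}^{t_{m−1}}), (c_1 c_2 ⋯ c_{n+m−1})^{t_m(b+ε−1)} } for n ≥ 2. Then c_{n+m}^{t_m} = exp(φ(n)) / (c_n^{t_0} c_{n+1}^{t_1} ⋯ c_{n+m−1}^{t_{m−1}}) for infinitely many n, and consequently limsup_{n→∞} log(c_n^{t_0} c_{n+1}^{t_1} ⋯ c_{n+m}^{t_m}) / φ(n) = 1. -/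

import Mathlib

open Filter

section Aux
variable {m : ℕ} {t : ℕ → ℝ} {φ : ℕ → ℝ} {b ε : ℝ} {Φ c : ℕ → ℝ}

/-- monotonicity of t up to m -/
lemma aux_tle (hmono : ∀ i < m, t i ≤ t (i + 1)) :
    ∀ j, j ≤ m → ∀ i, i ≤ j → t i ≤ t j := by
  intro j
  induction j with
  | zero =>
    intro _ i hi
    have h0 : i = 0 := by omega
    subst h0; exact le_rfl
  | succ j ih =>
    intro hjm i hi
    rcases eq_or_lt_of_le hi with rfl | h
    · exact le_rfl
    · exact (ih (by omega) i (by omega)).trans (hmono j (by omega))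

lemma aux_tpos (ht0 : 0 < t 0) (hmono : ∀ i < m, t i ≤ t (i + 1)) :
    ∀ i, i ≤ m → 0 < t i :=
  fun i hi => lt_of_lt_of_le ht0 (aux_tle hmono i hi 0 (Nat.zero_le i))

lemma aux_phi_le (hΦ : ∀ n, IsLeast {y | ∃ k, n ≤ k ∧ y = φ k} (Φ n)) :
    ∀ n, Φ n ≤ φ n := fun n => (hΦ n).2 ⟨n, le_rfl, rfl⟩

lemma aux_phi_mono (hΦ : ∀ n, IsLeast {y | ∃ k, n ≤ k ∧ y = φ k} (Φ n)) :
    ∀ a b', a ≤ b' → Φ a ≤ Φ b' := by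
  intro a b' hab
  obtain ⟨k, hk, hkeq⟩ := (hΦ b').1
  calc Φ a ≤ φ k := (hΦ a).2 ⟨k, hab.trans hk, rfl⟩
    _ = Φ b' := hkeq.symm

lemma aux_phi_pos (hφpos : ∀ n, 0 < φ n)
    (hΦ : ∀ n, IsLeast {y | ∃ k, n ≤ k ∧ y = φ k} (Φ n)) :
    ∀ n, 0 < Φ n := by
  intro n
  obtain ⟨k, _, hkeq⟩ := (hΦ n).1
  rw [hkeq]; exact hφpos k

end Aux

section Aux2
variable {m : ℕ} {t : ℕ → ℝ} {φ : ℕ → ℝ} {b ε : ℝ} {Φ c : ℕ → ℝ}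

/-- the window-shift inequality -/
lemma aux_shift (hmono : ∀ i < m, t i ≤ t (i + 1)) (n : ℕ)
    (hcw : ∀ j, 1 ≤ j → j ≤ n + m → 1 ≤ c j) (hn : 1 ≤ n) :
    (∏ i ∈ Finset.range m, c (n + 1 + i) ^ t i) * c n ^ t 0
      ≤ (∏ i ∈ Finset.range m, c (n + i) ^ t i) * c (n + m) ^ t m := by
  have hre : ∀ i : ℕ, n + 1 + i = n + (i + 1) := fun i => by omega
  have key : (∏ i ∈ Finset.range m, c (n + 1 + i) ^ t i)
      ≤ ∏ i ∈ Finset.range m, c (n + 1 + i) ^ t (i + 1) := by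
    apply Finset.prod_le_prod
    · intro i hi
      exact Real.rpow_nonneg
        (le_trans zero_le_one (hcw (n+1+i) (by omega) (by simp only [Finset.mem_range] at hi; omega))) _
    · intro i hi
      simp only [Finset.mem_range] at hi
      exact Real.rpow_le_rpow_of_exponent_le (hcw (n+1+i) (by omega) (by omega)) (hmono i hi)
  have hc0 : (0:ℝ) ≤ c n ^ t 0 :=
    Real.rpow_nonneg (le_trans zero_le_one (hcw n hn (by omega))) _
  calc (∏ i ∈ Finset.range m, c (n + 1 + i) ^ t i) * c n ^ t 0
      ≤ (∏ i ∈ Finset.range m, c (n + 1 + i) ^ t (i + 1)) * c n ^ t 0 :=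
        mul_le_mul_of_nonneg_right key hc0
    _ = ∏ j ∈ Finset.range (m + 1), c (n + j) ^ t j := by
        rw [Finset.prod_range_succ']
        simp_rw [hre, Nat.add_zero]
    _ = (∏ j ∈ Finset.range m, c (n + j) ^ t j) * c (n + m) ^ t m :=
        Finset.prod_range_succ _ _

end Aux2

section Aux3
variable {m : ℕ} {t : ℕ → ℝ} {φ : ℕ → ℝ} {b ε : ℝ} {Φ c : ℕ → ℝ}

/-- rewrite the recursion: c (n+m) ^ t m equals the min -/
lemma aux_cpow (htm : 0 < t m)
    (hcrec : ∀ n, 2 ≤ n → c (n + m) =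
      (min (Real.exp (Φ n) / ∏ i ∈ Finset.range m, c (n + i) ^ t i)
        ((∏ i ∈ Finset.Icc 1 (n + m - 1), c i) ^ (t m * (b + ε - 1)))) ^ (1 / t m))
    (n : ℕ) (hn : 2 ≤ n)
    (hA : 0 < ∏ i ∈ Finset.range m, c (n + i) ^ t i)
    (hB : 0 ≤ (∏ i ∈ Finset.Icc 1 (n + m - 1), c i) ^ (t m * (b + ε - 1))) :
    c (n + m) ^ t m = min (Real.exp (Φ n) / ∏ i ∈ Finset.range m, c (n + i) ^ t i)
      ((∏ i ∈ Finset.Icc 1 (n + m - 1), c i) ^ (t m * (b + ε - 1))) := by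
  have hmin0 : 0 ≤ min (Real.exp (Φ n) / ∏ i ∈ Finset.range m, c (n + i) ^ t i)
      ((∏ i ∈ Finset.Icc 1 (n + m - 1), c i) ^ (t m * (b + ε - 1))) :=
    le_min (le_of_lt (div_pos (Real.exp_pos _) hA)) hB
  rw [hcrec n hn, ← Real.rpow_mul hmin0, one_div_mul_cancel (ne_of_gt htm), Real.rpow_one]

/-- base case: A 2 ≤ exp (Φ 1). -/
lemma aux_A2 (hm : 1 ≤ m) (ht0 : 0 < t 0) (hmono : ∀ i < m, t i ≤ t (i + 1))
    (hΦ1 : 0 ≤ Φ 1)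
    (hc1 : ∀ n, 1 ≤ n → n ≤ m → c n = 1)
    (hc2 : c (m + 1) = Real.exp (Φ 1 / t m)) :
    (∏ i ∈ Finset.range m, c (2 + i) ^ t i) ≤ Real.exp (Φ 1) := by
  have htm : 0 < t m := aux_tpos ht0 hmono m le_rfl
  obtain ⟨mm, rfl⟩ : ∃ mm, m = mm + 1 := ⟨m - 1, by omega⟩
  rw [Finset.prod_range_succ]
  have h1 : (∏ i ∈ Finset.range mm, c (2 + i) ^ t i) = 1 := by
    apply Finset.prod_eq_one
    intro i hi
    simp only [Finset.mem_range] at hi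
    rw [hc1 (2 + i) (by omega) (by omega), Real.one_rpow]
  have h2 : 2 + mm = mm + 1 + 1 := by omega
  rw [h1, one_mul, h2, hc2]
  rw [← Real.exp_log (x := Real.exp (Φ 1 / t (mm+1)) ^ t mm)
    (Real.rpow_pos_of_pos (Real.exp_pos _) _)]
  rw [Real.log_rpow (Real.exp_pos _), Real.log_exp]
  apply Real.exp_le_exp.mpr
  have hle : t mm ≤ t (mm + 1) := hmono mm (by omega)
  have : t mm * (Φ 1 / t (mm + 1)) ≤ t (mm + 1) * (Φ 1 / t (mm + 1)) := by
    apply mul_le_mul_of_nonneg_right hle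
    positivity
  calc t mm * (Φ 1 / t (mm + 1)) ≤ t (mm + 1) * (Φ 1 / t (mm + 1)) := this
    _ = Φ 1 := by field_simp

end Aux3

section Aux4
variable {m : ℕ} {t : ℕ → ℝ} {φ : ℕ → ℝ} {b ε : ℝ} {Φ c : ℕ → ℝ}

lemma aux_Abound_aux (hm : 1 ≤ m) (ht0 : 0 < t 0) (hmono : ∀ i < m, t i ≤ t (i + 1))
    (hb : 1 ≤ b) (hε : 0 < ε)
    (hΦpos : ∀ n, 0 < Φ n) (hΦm : ∀ a b', a ≤ b' → Φ a ≤ Φ b')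
    (hc1 : ∀ n, 1 ≤ n → n ≤ m → c n = 1)
    (hc2 : c (m + 1) = Real.exp (Φ 1 / t m))
    (hcrec : ∀ n, 2 ≤ n → c (n + m) =
      (min (Real.exp (Φ n) / ∏ i ∈ Finset.range m, c (n + i) ^ t i)
        ((∏ i ∈ Finset.Icc 1 (n + m - 1), c i) ^ (t m * (b + ε - 1)))) ^ (1 / t m)) :
    ∀ k, 1 ≤ k → (∀ j, 1 ≤ j → j ≤ k + m → 1 ≤ c j) →
      (∏ i ∈ Finset.range m, c (k + 1 + i) ^ t i) ≤ Real.exp (Φ k) := by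
  have htm : 0 < t m := aux_tpos ht0 hmono m le_rfl
  intro k hk
  induction k, hk using Nat.le_induction with
  | base =>
    intro _
    have h12 : (∏ i ∈ Finset.range m, c (1 + 1 + i) ^ t i)
        = ∏ i ∈ Finset.range m, c (2 + i) ^ t i := by norm_num
    rw [h12]
    exact aux_A2 hm ht0 hmono (le_of_lt (hΦpos 1)) hc1 hc2
  | succ k hk ih =>
    intro hcw
    have hcw' : ∀ j, 1 ≤ j → j ≤ k + m → 1 ≤ c j := fun j h1 h2 => hcw j h1 (by omega)
    have ihA := ih hcw'
    have hApos : 0 < ∏ i ∈ Finset.range m, c (k + 1 + i) ^ t i := by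
      apply Finset.prod_pos
      intro i hi
      simp only [Finset.mem_range] at hi
      exact Real.rpow_pos_of_pos
        (lt_of_lt_of_le zero_lt_one (hcw (k + 1 + i) (by omega) (by omega))) _
    have hBnn : 0 ≤ (∏ i ∈ Finset.Icc 1 (k + 1 + m - 1), c i) ^ (t m * (b + ε - 1)) := by
      apply Real.rpow_nonneg
      apply Finset.prod_nonneg
      intro i hi
      simp only [Finset.mem_Icc] at hi
      exact le_trans zero_le_one (hcw i hi.1 (by omega))
    have hcp := aux_cpow htm hcrec (k + 1) (by omega) hApos hBnn
    have hcle : c (k + 1 + m) ^ t m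
        ≤ Real.exp (Φ (k + 1)) / ∏ i ∈ Finset.range m, c (k + 1 + i) ^ t i := by
      rw [hcp]; exact min_le_left _ _
    have hstep := aux_shift hmono (k + 1) (fun j h1 h2 => hcw j h1 (by omega)) (by omega)
    have hone : (1:ℝ) ≤ c (k + 1) ^ t 0 := by
      calc (1:ℝ) = 1 ^ t 0 := (Real.one_rpow _).symm
        _ ≤ c (k + 1) ^ t 0 :=
          Real.rpow_le_rpow zero_le_one (hcw (k + 1) (by omega) (by omega)) (le_of_lt ht0)
    have hAnn : 0 ≤ ∏ i ∈ Finset.range m, c (k + 1 + 1 + i) ^ t i := by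
      apply Finset.prod_nonneg
      intro i hi
      simp only [Finset.mem_range] at hi
      exact Real.rpow_nonneg (le_trans zero_le_one (hcw (k + 1 + 1 + i) (by omega) (by omega))) _
    calc (∏ i ∈ Finset.range m, c (k + 1 + 1 + i) ^ t i)
        ≤ (∏ i ∈ Finset.range m, c (k + 1 + 1 + i) ^ t i) * c (k + 1) ^ t 0 :=
          le_mul_of_one_le_right hAnn hone
      _ ≤ (∏ i ∈ Finset.range m, c (k + 1 + i) ^ t i) * c (k + 1 + m) ^ t m := hstep
      _ ≤ (∏ i ∈ Finset.range m, c (k + 1 + i) ^ t i)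
            * (Real.exp (Φ (k + 1)) / ∏ i ∈ Finset.range m, c (k + 1 + i) ^ t i) :=
          mul_le_mul_of_nonneg_left hcle (le_of_lt hApos)
      _ = Real.exp (Φ (k + 1)) := by
          rw [mul_div_assoc']
          exact mul_div_cancel_left₀ _ (ne_of_gt hApos)

end Aux4

section Aux5
variable {m : ℕ} {t : ℕ → ℝ} {φ : ℕ → ℝ} {b ε : ℝ} {Φ c : ℕ → ℝ}

lemma aux_cge1 (hm : 1 ≤ m) (ht0 : 0 < t 0) (hmono : ∀ i < m, t i ≤ t (i + 1))
    (hb : 1 ≤ b) (hε : 0 < ε)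
    (hΦpos : ∀ n, 0 < Φ n) (hΦm : ∀ a b', a ≤ b' → Φ a ≤ Φ b')
    (hc1 : ∀ n, 1 ≤ n → n ≤ m → c n = 1)
    (hc2 : c (m + 1) = Real.exp (Φ 1 / t m))
    (hcrec : ∀ n, 2 ≤ n → c (n + m) =
      (min (Real.exp (Φ n) / ∏ i ∈ Finset.range m, c (n + i) ^ t i)
        ((∏ i ∈ Finset.Icc 1 (n + m - 1), c i) ^ (t m * (b + ε - 1)))) ^ (1 / t m)) :
    ∀ n, 1 ≤ n → 1 ≤ c n := by
  have htm : 0 < t m := aux_tpos ht0 hmono m le_rfl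
  intro n
  induction n using Nat.strong_induction_on with
  | _ n ih =>
    intro hn
    rcases le_or_gt n m with h | h
    · rw [hc1 n hn h]
    · rcases eq_or_lt_of_le (Nat.succ_le_of_lt h) with h' | h'
      · rw [← h', hc2]
        exact Real.one_le_exp (div_nonneg (le_of_lt (hΦpos 1)) (le_of_lt htm))
      · -- n ≥ m + 2
        obtain ⟨k, rfl⟩ : ∃ k, n = k + m := ⟨n - m, by omega⟩
        have hk2 : 2 ≤ k := by omega
        obtain ⟨kk, rfl⟩ : ∃ kk, k = kk + 1 := ⟨k - 1, by omega⟩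
        have hkk1 : 1 ≤ kk := by omega
        have hApos : 0 < ∏ i ∈ Finset.range m, c (kk + 1 + i) ^ t i := by
          apply Finset.prod_pos
          intro i hi
          simp only [Finset.mem_range] at hi
          exact Real.rpow_pos_of_pos
            (lt_of_lt_of_le zero_lt_one (ih (kk + 1 + i) (by omega) (by omega))) _
        have hBone : 1 ≤ (∏ i ∈ Finset.Icc 1 (kk + 1 + m - 1), c i) ^ (t m * (b + ε - 1)) := by
          have hP1 : 1 ≤ ∏ i ∈ Finset.Icc 1 (kk + 1 + m - 1), c i := by
            calc (1:ℝ) = ∏ _i ∈ Finset.Icc 1 (kk + 1 + m - 1), (1:ℝ) := Finset.prod_const_one.symm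
              _ ≤ _ := by
                apply Finset.prod_le_prod (fun i _ => zero_le_one)
                intro i hi
                simp only [Finset.mem_Icc] at hi
                exact ih i (by omega) hi.1
          calc (1:ℝ) = 1 ^ (t m * (b + ε - 1)) := (Real.one_rpow _).symm
            _ ≤ _ := Real.rpow_le_rpow zero_le_one hP1 (by nlinarith)
        have hAle : (∏ i ∈ Finset.range m, c (kk + 1 + i) ^ t i) ≤ Real.exp (Φ (kk + 1)) := by
          have h1 : ∀ j, 1 ≤ j → j ≤ kk + m → 1 ≤ c j := fun j hj1 hj2 => ih j (by omega) hj1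
          calc (∏ i ∈ Finset.range m, c (kk + 1 + i) ^ t i) ≤ Real.exp (Φ kk) :=
              aux_Abound_aux hm ht0 hmono hb hε hΦpos hΦm hc1 hc2 hcrec kk hkk1 h1
            _ ≤ Real.exp (Φ (kk + 1)) := Real.exp_le_exp.mpr (hΦm kk (kk + 1) (by omega))
        have hFone : 1 ≤ Real.exp (Φ (kk + 1)) / ∏ i ∈ Finset.range m, c (kk + 1 + i) ^ t i :=
          (one_le_div hApos).mpr hAle
        have hmin1 : 1 ≤ min (Real.exp (Φ (kk + 1)) / ∏ i ∈ Finset.range m, c (kk + 1 + i) ^ t i)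
            ((∏ i ∈ Finset.Icc 1 (kk + 1 + m - 1), c i) ^ (t m * (b + ε - 1))) :=
          le_min hFone hBone
        rw [hcrec (kk + 1) hk2]
        calc (1:ℝ) = 1 ^ (1 / t m) := (Real.one_rpow _).symm
          _ ≤ _ := Real.rpow_le_rpow zero_le_one hmin1 (by positivity)

end Aux5

section Aux6
variable {m : ℕ} {t : ℕ → ℝ} {φ : ℕ → ℝ} {b ε : ℝ} {Φ c : ℕ → ℝ}

/-- product of rpow's of a fixed positive base -/
lemma aux_prodpow {X : ℝ} (hX : 0 < X) (s : ℕ) (g : ℕ → ℝ) :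
    ∏ i ∈ Finset.range s, X ^ g i = X ^ (∑ i ∈ Finset.range s, g i) := by
  induction s with
  | zero => simp
  | succ s ih => rw [Finset.prod_range_succ, Finset.sum_range_succ, ih, ← Real.rpow_add hX]

/-- monotonicity of the partial products -/
lemma aux_Pmono (hcge : ∀ j, 1 ≤ j → 1 ≤ c j) :
    ∀ M M' : ℕ, M ≤ M' → (∏ i ∈ Finset.Icc 1 M, c i) ≤ ∏ i ∈ Finset.Icc 1 M', c i := by
  intro M M' h
  induction M', h using Nat.le_induction with
  | base => exact le_rfl
  | succ M' h ih =>
    have h1 : (∏ i ∈ Finset.Icc 1 (M' + 1), c i) = (∏ i ∈ Finset.Icc 1 M', c i) * c (M' + 1) :=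
      Finset.prod_Icc_succ_top (by omega) _
    have h2 : (0:ℝ) ≤ ∏ i ∈ Finset.Icc 1 M', c i := by
      apply Finset.prod_nonneg
      intro i hi
      simp only [Finset.mem_Icc] at hi
      exact le_trans zero_le_one (hcge i hi.1)
    calc (∏ i ∈ Finset.Icc 1 M, c i) ≤ ∏ i ∈ Finset.Icc 1 M', c i := ih
      _ ≤ (∏ i ∈ Finset.Icc 1 M', c i) * c (M' + 1) :=
          le_mul_of_one_le_right h2 (hcge (M' + 1) (by omega))
      _ = ∏ i ∈ Finset.Icc 1 (M' + 1), c i := h1.symm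

/-- the letter bound: every recursion-created letter is at most P^(b+ε-1) -/
lemma aux_letter (ht0 : 0 < t 0) (hmono : ∀ i < m, t i ≤ t (i + 1))
    (hb : 1 ≤ b) (hε : 0 < ε)
    (hcge : ∀ j, 1 ≤ j → 1 ≤ c j)
    (hcrec : ∀ n, 2 ≤ n → c (n + m) =
      (min (Real.exp (Φ n) / ∏ i ∈ Finset.range m, c (n + i) ^ t i)
        ((∏ i ∈ Finset.Icc 1 (n + m - 1), c i) ^ (t m * (b + ε - 1)))) ^ (1 / t m))
    (n : ℕ) (hn : 2 ≤ n) (M : ℕ) (hM : n + m - 1 ≤ M) :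
    c (n + m) ≤ (∏ i ∈ Finset.Icc 1 M, c i) ^ (b + ε - 1) := by
  have htm : 0 < t m := aux_tpos ht0 hmono m le_rfl
  have hρ : (0:ℝ) < b + ε - 1 := by linarith
  have hApos : 0 < ∏ i ∈ Finset.range m, c (n + i) ^ t i := by
    apply Finset.prod_pos
    intro i hi
    exact Real.rpow_pos_of_pos (lt_of_lt_of_le zero_lt_one (hcge (n + i) (by omega))) _
  have hPnn : ∀ M' : ℕ, (0:ℝ) ≤ ∏ i ∈ Finset.Icc 1 M', c i := by
    intro M'
    apply Finset.prod_nonneg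
    intro i hi
    simp only [Finset.mem_Icc] at hi
    exact le_trans zero_le_one (hcge i hi.1)
  have hBnn : 0 ≤ (∏ i ∈ Finset.Icc 1 (n + m - 1), c i) ^ (t m * (b + ε - 1)) :=
    Real.rpow_nonneg (hPnn _) _
  have hcmin := aux_cpow htm hcrec n hn hApos hBnn
  have hcB : c (n + m) ^ t m ≤ (∏ i ∈ Finset.Icc 1 (n + m - 1), c i) ^ (t m * (b + ε - 1)) := by
    rw [hcmin]; exact min_le_right _ _
  have hcnn : (0:ℝ) ≤ c (n + m) := le_trans zero_le_one (hcge (n + m) (by omega))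
  have h1 : c (n + m) = (c (n + m) ^ t m) ^ (1 / t m) := by
    rw [← Real.rpow_mul hcnn, mul_one_div_cancel (ne_of_gt htm), Real.rpow_one]
  have h2 : ((∏ i ∈ Finset.Icc 1 (n + m - 1), c i) ^ (t m * (b + ε - 1))) ^ (1 / t m)
      = (∏ i ∈ Finset.Icc 1 (n + m - 1), c i) ^ (b + ε - 1) := by
    rw [← Real.rpow_mul (hPnn _)]
    congr 1
    field_simp
  have h3 : (∏ i ∈ Finset.Icc 1 (n + m - 1), c i) ≤ ∏ i ∈ Finset.Icc 1 M, c i :=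
    aux_Pmono hcge _ _ hM
  calc c (n + m) = (c (n + m) ^ t m) ^ (1 / t m) := h1
    _ ≤ ((∏ i ∈ Finset.Icc 1 (n + m - 1), c i) ^ (t m * (b + ε - 1))) ^ (1 / t m) :=
        Real.rpow_le_rpow (Real.rpow_nonneg hcnn _) hcB (by positivity)
    _ = (∏ i ∈ Finset.Icc 1 (n + m - 1), c i) ^ (b + ε - 1) := h2
    _ ≤ (∏ i ∈ Finset.Icc 1 M, c i) ^ (b + ε - 1) :=
        Real.rpow_le_rpow (hPnn _) h3 (le_of_lt hρ)

end Aux6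

section Aux7
variable {m : ℕ} {t : ℕ → ℝ} {φ : ℕ → ℝ} {b ε : ℝ} {Φ c : ℕ → ℝ}

/-- THE KEY LEMMA: persistence of the first branch while Φ stays constant. -/
lemma aux_persist (hm : 1 ≤ m) (ht0 : 0 < t 0) (hmono : ∀ i < m, t i ≤ t (i + 1))
    (hb : 1 ≤ b) (hε : 0 < ε)
    (hcge : ∀ j, 1 ≤ j → 1 ≤ c j)
    (hcrec : ∀ n, 2 ≤ n → c (n + m) =
      (min (Real.exp (Φ n) / ∏ i ∈ Finset.range m, c (n + i) ^ t i)
        ((∏ i ∈ Finset.Icc 1 (n + m - 1), c i) ^ (t m * (b + ε - 1)))) ^ (1 / t m))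
    (n : ℕ) (hn : m + 2 ≤ n) (hΦeq : Φ (n + 1) = Φ n)
    (hF : Real.exp (Φ n) / (∏ i ∈ Finset.range m, c (n + i) ^ t i)
        ≤ (∏ i ∈ Finset.Icc 1 (n + m - 1), c i) ^ (t m * (b + ε - 1))) :
    Real.exp (Φ (n + 1)) / (∏ i ∈ Finset.range m, c (n + 1 + i) ^ t i)
        ≤ (∏ i ∈ Finset.Icc 1 (n + 1 + m - 1), c i) ^ (t m * (b + ε - 1)) := by
  have htm : 0 < t m := aux_tpos ht0 hmono m le_rfl
  have hρ : (0:ℝ) < b + ε - 1 := by linarith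
  have hcpos : ∀ j, 1 ≤ j → (0:ℝ) < c j := fun j hj => lt_of_lt_of_le zero_lt_one (hcge j hj)
  -- π := the partial product up to n+m-1
  set π : ℝ := ∏ i ∈ Finset.Icc 1 (n + m - 1), c i with hπ
  have hπpos : 0 < π := by
    apply Finset.prod_pos
    intro i hi
    simp only [Finset.mem_Icc] at hi
    exact hcpos i hi.1
  have hπnn : (0:ℝ) ≤ π := le_of_lt hπpos
  have hApos : ∀ k, 1 ≤ k → (0:ℝ) < ∏ i ∈ Finset.range m, c (k + i) ^ t i := by
    intro k hk
    apply Finset.prod_pos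
    intro i hi
    exact Real.rpow_pos_of_pos (hcpos (k + i) (by omega)) _
  -- value of the new letter
  have hBnn : 0 ≤ π ^ (t m * (b + ε - 1)) := Real.rpow_nonneg hπnn _
  have hcval : c (n + m) ^ t m = Real.exp (Φ n) / ∏ i ∈ Finset.range m, c (n + i) ^ t i := by
    rw [aux_cpow htm hcrec n (by omega) (hApos n (by omega)) (by exact hBnn)]
    exact min_eq_left hF
  have hexp : (∏ i ∈ Finset.range m, c (n + i) ^ t i) * c (n + m) ^ t m = Real.exp (Φ n) := by
    rw [hcval, mul_div_assoc']
    exact mul_div_cancel_left₀ _ (ne_of_gt (hApos n (by omega)))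
  -- all window letters are bounded by π ^ (b+ε-1)
  have hlem : ∀ i, i ≤ m → c (n + i) ≤ π ^ (b + ε - 1) := by
    intro i hi
    have h1 : n + i = (n - m + i) + m := by omega
    rw [h1]
    exact aux_letter ht0 hmono hb hε hcge hcrec (n - m + i) (by omega) (n + m - 1) (by omega)
  -- work with m = mm + 1
  obtain ⟨mm, rfl⟩ : ∃ mm, m = mm + 1 := ⟨m - 1, by omega⟩
  set Q : ℝ := ∏ i ∈ Finset.range mm, c (n + 1 + i) ^ t i with hQ
  have hQpos : 0 < Q := by
    apply Finset.prod_pos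
    intro i hi
    exact Real.rpow_pos_of_pos (hcpos (n + 1 + i) (by omega)) _
  have hA1 : (∏ i ∈ Finset.range (mm + 1), c (n + 1 + i) ^ t i) = Q * c (n + mm + 1) ^ t mm := by
    rw [Finset.prod_range_succ, show n + 1 + mm = n + mm + 1 from by omega]
  -- bound on A n
  have hAn : (∏ i ∈ Finset.range (mm + 1), c (n + i) ^ t i)
      ≤ Q * π ^ ((b + ε - 1) * t mm) := by
    rw [Finset.prod_range_succ']
    have hre2 : (∏ i ∈ Finset.range mm, c (n + (i + 1)) ^ t (i + 1))
        = ∏ i ∈ Finset.range mm, c (n + 1 + i) ^ t (i + 1) :=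
      Finset.prod_congr rfl (fun i _ => by rw [show n + (i + 1) = n + 1 + i from by omega])
    rw [hre2]
    have hsplit : ∀ i, i ∈ Finset.range mm →
        c (n + 1 + i) ^ t (i + 1) ≤ c (n + 1 + i) ^ t i * π ^ ((b + ε - 1) * (t (i + 1) - t i)) := by
      intro i hi
      simp only [Finset.mem_range] at hi
      have hci : (0:ℝ) < c (n + 1 + i) := hcpos _ (by omega)
      have e : c (n + 1 + i) ^ t (i + 1)
          = c (n + 1 + i) ^ t i * c (n + 1 + i) ^ (t (i + 1) - t i) := by
        rw [← Real.rpow_add hci]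
        congr 1
        ring
      rw [e]
      apply mul_le_mul_of_nonneg_left _ (le_of_lt (Real.rpow_pos_of_pos hci _))
      calc c (n + 1 + i) ^ (t (i + 1) - t i)
          ≤ (π ^ (b + ε - 1)) ^ (t (i + 1) - t i) := by
            apply Real.rpow_le_rpow (le_of_lt hci) _ (by
              have := hmono i (by omega); linarith)
            have h1 : n + 1 + i = n + (i + 1) := by omega
            rw [h1]
            exact hlem (i + 1) (by omega)
        _ = π ^ ((b + ε - 1) * (t (i + 1) - t i)) := by rw [← Real.rpow_mul hπnn]
    have hc0 : c (n + 0) ^ t 0 ≤ π ^ ((b + ε - 1) * t 0) := by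
      calc c (n + 0) ^ t 0 ≤ (π ^ (b + ε - 1)) ^ t 0 :=
            Real.rpow_le_rpow (le_of_lt (hcpos _ (by omega))) (hlem 0 (by omega)) (le_of_lt ht0)
        _ = π ^ ((b + ε - 1) * t 0) := by rw [← Real.rpow_mul hπnn]
    calc (∏ i ∈ Finset.range mm, c (n + 1 + i) ^ t (i + 1)) * c (n + 0) ^ t 0
        ≤ (∏ i ∈ Finset.range mm, (c (n + 1 + i) ^ t i * π ^ ((b + ε - 1) * (t (i + 1) - t i))))
            * (π ^ ((b + ε - 1) * t 0)) := by
          have g1 : ∀ i ∈ Finset.range mm, (0:ℝ) ≤ c (n + 1 + i) ^ t (i + 1) := fun i hi =>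
            Real.rpow_nonneg (le_trans zero_le_one (hcge (n + 1 + i) (by omega))) _
          have g2 : (0:ℝ) ≤ c (n + 0) ^ t 0 :=
            Real.rpow_nonneg (le_trans zero_le_one (hcge (n + 0) (by omega))) _
          have g3 : (0:ℝ) ≤ ∏ i ∈ Finset.range mm,
              (c (n + 1 + i) ^ t i * π ^ ((b + ε - 1) * (t (i + 1) - t i))) := by
            apply Finset.prod_nonneg
            intro i hi
            exact mul_nonneg
              (Real.rpow_nonneg (le_trans zero_le_one (hcge (n + 1 + i) (by omega))) _)
              (Real.rpow_nonneg hπnn _)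
          exact mul_le_mul (Finset.prod_le_prod g1 hsplit) hc0 g2 g3
      _ = Q * ((∏ i ∈ Finset.range mm, π ^ ((b + ε - 1) * (t (i + 1) - t i)))
            * π ^ ((b + ε - 1) * t 0)) := by
          rw [Finset.prod_mul_distrib]; ring
      _ = Q * π ^ ((b + ε - 1) * t mm) := by
          congr 1
          rw [aux_prodpow hπpos, ← Real.rpow_add hπpos]
          congr 1
          rw [← Finset.mul_sum, Finset.sum_range_sub (fun i => t i)]
          ring
  -- bound on the extra power of the new letter
  have hcm : c (n + mm + 1) ^ (t (mm + 1) - t mm) ≤ π ^ ((b + ε - 1) * (t (mm + 1) - t mm)) := by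
    have h1 : n + mm + 1 = n + (mm + 1) := by omega
    calc c (n + mm + 1) ^ (t (mm + 1) - t mm)
        ≤ (π ^ (b + ε - 1)) ^ (t (mm + 1) - t mm) := by
          apply Real.rpow_le_rpow (le_of_lt (hcpos _ (by omega))) _ (by
            have := hmono mm (by omega); linarith)
          rw [h1]; exact hlem (mm + 1) le_rfl
      _ = π ^ ((b + ε - 1) * (t (mm + 1) - t mm)) := by rw [← Real.rpow_mul hπnn]
  -- main chain
  have hmain : Real.exp (Φ n) ≤ (∏ i ∈ Finset.range (mm + 1), c (n + 1 + i) ^ t i)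
      * π ^ (t (mm + 1) * (b + ε - 1)) := by
    have hsplitc : c (n + (mm + 1)) ^ t (mm + 1)
        = c (n + mm + 1) ^ t mm * c (n + mm + 1) ^ (t (mm + 1) - t mm) := by
      have h1 : n + (mm + 1) = n + mm + 1 := by omega
      rw [h1, ← Real.rpow_add (hcpos _ (by omega))]
      congr 1
      ring
    calc Real.exp (Φ n) = (∏ i ∈ Finset.range (mm + 1), c (n + i) ^ t i)
          * c (n + (mm + 1)) ^ t (mm + 1) := hexp.symm
      _ = (∏ i ∈ Finset.range (mm + 1), c (n + i) ^ t i)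
          * (c (n + mm + 1) ^ t mm * c (n + mm + 1) ^ (t (mm + 1) - t mm)) := by rw [hsplitc]
      _ ≤ (Q * π ^ ((b + ε - 1) * t mm))
          * (c (n + mm + 1) ^ t mm * π ^ ((b + ε - 1) * (t (mm + 1) - t mm))) := by
          have g1 : c (n + mm + 1) ^ t mm * c (n + mm + 1) ^ (t (mm + 1) - t mm)
              ≤ c (n + mm + 1) ^ t mm * π ^ ((b + ε - 1) * (t (mm + 1) - t mm)) :=
            mul_le_mul_of_nonneg_left hcm
              (Real.rpow_nonneg (le_trans zero_le_one (hcge (n + mm + 1) (by omega))) _)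
          have g2 : (0:ℝ) ≤ c (n + mm + 1) ^ t mm * c (n + mm + 1) ^ (t (mm + 1) - t mm) :=
            mul_nonneg
              (Real.rpow_nonneg (le_trans zero_le_one (hcge (n + mm + 1) (by omega))) _)
              (Real.rpow_nonneg (le_trans zero_le_one (hcge (n + mm + 1) (by omega))) _)
          exact mul_le_mul hAn g1 g2
            (le_of_lt (mul_pos hQpos (Real.rpow_pos_of_pos hπpos _)))
      _ = (Q * c (n + mm + 1) ^ t mm)
          * (π ^ ((b + ε - 1) * t mm) * π ^ ((b + ε - 1) * (t (mm + 1) - t mm))) := by ring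
      _ = (∏ i ∈ Finset.range (mm + 1), c (n + 1 + i) ^ t i) * π ^ (t (mm + 1) * (b + ε - 1)) := by
          rw [hA1, ← Real.rpow_add hπpos]
          congr 2
          ring
  -- conclude
  have hπmono : π ^ (t (mm + 1) * (b + ε - 1))
      ≤ (∏ i ∈ Finset.Icc 1 (n + 1 + (mm + 1) - 1), c i) ^ (t (mm + 1) * (b + ε - 1)) := by
    apply Real.rpow_le_rpow hπnn (aux_Pmono hcge _ _ (by omega)) (by positivity)
  rw [hΦeq, div_le_iff₀ (hApos (n + 1) (by omega))]
  calc Real.exp (Φ n) ≤ (∏ i ∈ Finset.range (mm + 1), c (n + 1 + i) ^ t i)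
        * π ^ (t (mm + 1) * (b + ε - 1)) := hmain
    _ ≤ (∏ i ∈ Finset.range (mm + 1), c (n + 1 + i) ^ t i)
        * (∏ i ∈ Finset.Icc 1 (n + 1 + (mm + 1) - 1), c i) ^ (t (mm + 1) * (b + ε - 1)) := by
        apply mul_le_mul_of_nonneg_left hπmono (le_of_lt (hApos (n + 1) (by omega)))
    _ = (∏ i ∈ Finset.Icc 1 (n + 1 + (mm + 1) - 1), c i) ^ (t (mm + 1) * (b + ε - 1))
        * (∏ i ∈ Finset.range (mm + 1), c (n + 1 + i) ^ t i) := by ring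

end Aux7

section Aux8
variable {m : ℕ} {t : ℕ → ℝ} {φ : ℕ → ℝ} {b ε : ℝ} {Φ c : ℕ → ℝ}

/-- if the second branch were strictly smaller cofinally, the liminf hypothesis fails -/
lemma aux_first_freq (hm : 1 ≤ m) (ht0 : 0 < t 0) (hmono : ∀ i < m, t i ≤ t (i + 1))
    (hφpos : ∀ n, 0 < φ n) (hb : 1 ≤ b) (hε : 0 < ε)
    (hlogb : Filter.liminf (fun n : ℕ => ((Real.log (φ n) / n : ℝ) : EReal)) Filter.atTop
      = (Real.log b : EReal))
    (hΦ : ∀ n, IsLeast {y | ∃ k, n ≤ k ∧ y = φ k} (Φ n))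
    (hcge : ∀ j, 1 ≤ j → 1 ≤ c j)
    (hc2 : c (m + 1) = Real.exp (Φ 1 / t m))
    (hcrec : ∀ n, 2 ≤ n → c (n + m) =
      (min (Real.exp (Φ n) / ∏ i ∈ Finset.range m, c (n + i) ^ t i)
        ((∏ i ∈ Finset.Icc 1 (n + m - 1), c i) ^ (t m * (b + ε - 1)))) ^ (1 / t m)) :
    ∀ N, ∃ f, N ≤ f ∧ m + 2 ≤ f ∧
      Real.exp (Φ f) / (∏ i ∈ Finset.range m, c (f + i) ^ t i)
        ≤ (∏ i ∈ Finset.Icc 1 (f + m - 1), c i) ^ (t m * (b + ε - 1)) := by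
  have htm : 0 < t m := aux_tpos ht0 hmono m le_rfl
  have hρ : (0:ℝ) < b + ε - 1 := by linarith
  have hΦφ : ∀ n, Φ n ≤ φ n := aux_phi_le hΦ
  have hΦpos : ∀ n, 0 < Φ n := aux_phi_pos hφpos hΦ
  have hcpos : ∀ j, 1 ≤ j → (0:ℝ) < c j := fun j hj => lt_of_lt_of_le zero_lt_one (hcge j hj)
  have hPpos : ∀ M : ℕ, (0:ℝ) < ∏ i ∈ Finset.Icc 1 M, c i := by
    intro M
    apply Finset.prod_pos
    intro i hi
    simp only [Finset.mem_Icc] at hi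
    exact hcpos i hi.1
  have hApos : ∀ k, 1 ≤ k → (0:ℝ) < ∏ i ∈ Finset.range m, c (k + i) ^ t i := by
    intro k hk
    apply Finset.prod_pos
    intro i hi
    exact Real.rpow_pos_of_pos (hcpos (k + i) (by omega)) _
  have hAge1 : ∀ k, 1 ≤ k → (1:ℝ) ≤ ∏ i ∈ Finset.range m, c (k + i) ^ t i := by
    intro k hk
    calc (1:ℝ) = ∏ _i ∈ Finset.range m, (1:ℝ) := Finset.prod_const_one.symm
      _ ≤ _ := by
        apply Finset.prod_le_prod (fun i _ => zero_le_one)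
        intro i hi
        simp only [Finset.mem_range] at hi
        calc (1:ℝ) = 1 ^ t i := (Real.one_rpow _).symm
          _ ≤ c (k + i) ^ t i := Real.rpow_le_rpow zero_le_one (hcge (k + i) (by omega))
              (le_of_lt (aux_tpos ht0 hmono i (by omega)))
  have hBpos : ∀ nn : ℕ, (0:ℝ) < (∏ i ∈ Finset.Icc 1 (nn + m - 1), c i) ^ (t m * (b + ε - 1)) :=
    fun nn => Real.rpow_pos_of_pos (hPpos _) _
  intro N
  by_contra hcon
  push_neg at hcon
  set N₀ := max N (m + 2) with hN₀
  have hN₀m : m + 2 ≤ N₀ := le_max_right _ _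
  have H : ∀ n, N₀ ≤ n → (∏ i ∈ Finset.Icc 1 (n + m - 1), c i) ^ (t m * (b + ε - 1))
      < Real.exp (Φ n) / ∏ i ∈ Finset.range m, c (n + i) ^ t i :=
    fun n hn => hcon n (le_trans (le_max_left _ _) hn) (le_trans (le_max_right _ _) hn)
  have hsec : ∀ n, N₀ ≤ n → c (n + m) ^ t m
      = (∏ i ∈ Finset.Icc 1 (n + m - 1), c i) ^ (t m * (b + ε - 1)) := by
    intro n hn
    rw [aux_cpow htm hcrec n (by omega) (hApos n (by omega)) (le_of_lt (hBpos n))]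
    exact min_eq_right (le_of_lt (H n hn))
  have hBsucc : ∀ n, N₀ ≤ n →
      (∏ i ∈ Finset.Icc 1 (n + 1 + m - 1), c i) ^ (t m * (b + ε - 1))
      = ((∏ i ∈ Finset.Icc 1 (n + m - 1), c i) ^ (t m * (b + ε - 1))) ^ (b + ε) := by
    intro n hn
    have e1 : n + 1 + m - 1 = (n + m - 1) + 1 := by omega
    rw [e1, Finset.prod_Icc_succ_top (by omega : 1 ≤ (n + m - 1) + 1),
      show (n + m - 1) + 1 = n + m from by omega]
    rw [Real.mul_rpow (le_of_lt (hPpos _)) (le_of_lt (hcpos (n + m) (by omega)))]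
    rw [show t m * (b + ε - 1) = t m * (b + ε - 1) from rfl]
    have e2 : c (n + m) ^ (t m * (b + ε - 1)) = (c (n + m) ^ t m) ^ (b + ε - 1) := by
      rw [← Real.rpow_mul (le_of_lt (hcpos (n + m) (by omega)))]
    rw [e2, hsec n hn]
    set B := (∏ i ∈ Finset.Icc 1 (n + m - 1), c i) ^ (t m * (b + ε - 1)) with hB
    have hBp : 0 < B := hBpos n
    calc B * B ^ (b + ε - 1) = B ^ (1:ℝ) * B ^ (b + ε - 1) := by rw [Real.rpow_one]
      _ = B ^ (1 + (b + ε - 1)) := (Real.rpow_add hBp _ _).symm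
      _ = B ^ (b + ε) := by norm_num
  set K := Real.log ((∏ i ∈ Finset.Icc 1 (N₀ + m - 1), c i) ^ (t m * (b + ε - 1))) with hKdef
  have hlog : ∀ j : ℕ, Real.log ((∏ i ∈ Finset.Icc 1 (N₀ + j + m - 1), c i) ^ (t m * (b + ε - 1)))
      = (b + ε) ^ j * K := by
    intro j
    induction j with
    | zero => simp [hKdef]
    | succ j ih =>
      have e1 : N₀ + (j + 1) = (N₀ + j) + 1 := by omega
      rw [e1, hBsucc (N₀ + j) (by omega), Real.log_rpow (hBpos (N₀ + j)), ih, pow_succ]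
      ring
  have hK : 0 < K := by
    rw [hKdef, Real.log_rpow (hPpos _)]
    apply mul_pos (mul_pos htm hρ)
    have hmem : m + 1 ∈ Finset.Icc 1 (N₀ + m - 1) := by
      simp only [Finset.mem_Icc]
      omega
    have h1 : c (m + 1) ≤ ∏ i ∈ Finset.Icc 1 (N₀ + m - 1), c i := by
      rw [← Finset.mul_prod_erase _ _ hmem]
      apply le_mul_of_one_le_right (le_of_lt (hcpos (m + 1) (by omega)))
      calc (1:ℝ) = ∏ _i ∈ (Finset.Icc 1 (N₀ + m - 1)).erase (m + 1), (1:ℝ) :=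
            Finset.prod_const_one.symm
        _ ≤ _ := by
          apply Finset.prod_le_prod (fun i _ => zero_le_one)
          intro i hi
          have := Finset.mem_of_mem_erase hi
          simp only [Finset.mem_Icc] at this
          exact hcge i this.1
    have h2 : Φ 1 / t m ≤ Real.log (∏ i ∈ Finset.Icc 1 (N₀ + m - 1), c i) := by
      calc Φ 1 / t m = Real.log (c (m + 1)) := by rw [hc2, Real.log_exp]
        _ ≤ _ := Real.log_le_log (hcpos (m + 1) (by omega)) h1
    have h3 : 0 < Φ 1 / t m := div_pos (hΦpos 1) htm
    linarith
  have hφlb : ∀ j : ℕ, (b + ε) ^ j * K ≤ φ (N₀ + j) := by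
    intro j
    rw [← hlog j]
    have hlt := H (N₀ + j) (by omega)
    have h1 : (∏ i ∈ Finset.Icc 1 (N₀ + j + m - 1), c i) ^ (t m * (b + ε - 1))
        ≤ Real.exp (φ (N₀ + j)) := by
      calc (∏ i ∈ Finset.Icc 1 (N₀ + j + m - 1), c i) ^ (t m * (b + ε - 1))
          ≤ Real.exp (Φ (N₀ + j)) / ∏ i ∈ Finset.range m, c (N₀ + j + i) ^ t i :=
            le_of_lt hlt
        _ ≤ Real.exp (Φ (N₀ + j)) :=
            div_le_self (le_of_lt (Real.exp_pos _)) (hAge1 (N₀ + j) (by omega))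
        _ ≤ Real.exp (φ (N₀ + j)) := Real.exp_le_exp.mpr (hΦφ _)
    calc Real.log ((∏ i ∈ Finset.Icc 1 (N₀ + j + m - 1), c i) ^ (t m * (b + ε - 1)))
        ≤ Real.log (Real.exp (φ (N₀ + j))) := Real.log_le_log (hBpos _) h1
      _ = φ (N₀ + j) := Real.log_exp _
  -- now the liminf contradiction
  have hb0 : (0:ℝ) < b := lt_of_lt_of_le zero_lt_one hb
  have hββ : Real.log b < Real.log (b + ε) := Real.log_lt_log hb0 (by linarith)
  set β' := (Real.log b + Real.log (b + ε)) / 2 with hβ'def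
  have hβ'1 : Real.log b < β' := by rw [hβ'def]; linarith
  have hβ'2 : β' < Real.log (b + ε) := by rw [hβ'def]; linarith
  have hEV : ∀ᶠ n : ℕ in Filter.atTop, (β' : EReal) ≤ ((Real.log (φ n) / n : ℝ) : EReal) := by
    obtain ⟨J₀, hJ₀⟩ := exists_nat_ge ((β' * N₀ - Real.log K) / (Real.log (b + ε) - β'))
    rw [Filter.eventually_atTop]
    refine ⟨N₀ + J₀, fun n hn => ?_⟩
    obtain ⟨j, rfl⟩ : ∃ j, n = N₀ + j := ⟨n - N₀, by omega⟩
    have hjJ : J₀ ≤ j := by omega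
    have hbε0 : (0:ℝ) < b + ε := by linarith
    have hlogφ : (j : ℝ) * Real.log (b + ε) + Real.log K ≤ Real.log (φ (N₀ + j)) := by
      calc (j : ℝ) * Real.log (b + ε) + Real.log K
          = Real.log ((b + ε) ^ j * K) := by
            rw [Real.log_mul (by positivity) (ne_of_gt hK), Real.log_pow]
      _ ≤ Real.log (φ (N₀ + j)) :=
            Real.log_le_log (by positivity) (hφlb j)
    have hkey : β' * ((N₀ : ℝ) + j) ≤ (j:ℝ) * Real.log (b + ε) + Real.log K := by
      have h1 : (β' * N₀ - Real.log K) ≤ (J₀ : ℝ) * (Real.log (b + ε) - β') := by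
        rw [div_le_iff₀ (by linarith)] at hJ₀
        linarith
      have h2 : (J₀ : ℝ) ≤ (j : ℝ) := Nat.cast_le.mpr hjJ
      nlinarith [sub_nonneg.mpr h2]
    have hn0 : (0:ℝ) < ((N₀ + j : ℕ) : ℝ) := by
      push_cast
      have h2N : 2 ≤ N₀ := by omega
      have : (2:ℝ) ≤ (N₀:ℝ) := by exact_mod_cast h2N
      linarith [(Nat.cast_nonneg j : (0:ℝ) ≤ (j:ℝ))]
    have hreal : β' ≤ Real.log (φ (N₀ + j)) / ((N₀ + j : ℕ) : ℝ) := by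
      rw [le_div_iff₀ hn0]
      push_cast
      calc β' * ((N₀:ℝ) + (j:ℝ)) ≤ (j:ℝ) * Real.log (b + ε) + Real.log K := hkey
        _ ≤ Real.log (φ (N₀ + j)) := hlogφ
    exact_mod_cast EReal.coe_le_coe_iff.mpr hreal
  have hlim : (β' : EReal) ≤ Filter.liminf
      (fun n : ℕ => ((Real.log (φ n) / n : ℝ) : EReal)) Filter.atTop :=
    Filter.le_liminf_of_le (by isBoundedDefault) hEV
  rw [hlogb] at hlim
  have : β' ≤ Real.log b := EReal.coe_le_coe_iff.mp hlim
  linarith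

end Aux8


theorem stmt_16 (m : ℕ) (hm : 1 ≤ m) (t : ℕ → ℝ) (ht0 : 0 < t 0)
    (hmono : ∀ i < m, t i ≤ t (i + 1))
    (φ : ℕ → ℝ) (hφpos : ∀ n, 0 < φ n)
    (hφ : Tendsto (fun n : ℕ => φ n / n) atTop atTop)
    (b : ℝ) (hb : 1 ≤ b)
    (hlogb : liminf (fun n : ℕ => ((Real.log (φ n) / n : ℝ) : EReal)) atTop
      = (Real.log b : EReal))
    (ε : ℝ) (hε : 0 < ε)
    (Φ : ℕ → ℝ) (hΦ : ∀ n, IsLeast {y | ∃ k, n ≤ k ∧ y = φ k} (Φ n))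
    (c : ℕ → ℝ)
    (hc1 : ∀ n, 1 ≤ n → n ≤ m → c n = 1)
    (hc2 : c (m + 1) = Real.exp (Φ 1 / t m))
    (hcrec : ∀ n, 2 ≤ n → c (n + m) =
      (min (Real.exp (Φ n) / ∏ i ∈ Finset.range m, c (n + i) ^ t i)
        ((∏ i ∈ Finset.Icc 1 (n + m - 1), c i) ^ (t m * (b + ε - 1)))) ^ (1 / t m)) :
    (∃ᶠ n : ℕ in atTop,
      c (n + m) ^ t m = Real.exp (φ n) / ∏ i ∈ Finset.range m, c (n + i) ^ t i) ∧
    limsup (fun n : ℕ =>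
        ((Real.log (∏ i ∈ Finset.range (m + 1), c (n + i) ^ t i) / φ n : ℝ) : EReal)) atTop
      = 1 := by
  have htm : 0 < t m := aux_tpos ht0 hmono m le_rfl
  have hΦφ : ∀ n, Φ n ≤ φ n := aux_phi_le hΦ
  have hΦm : ∀ a b', a ≤ b' → Φ a ≤ Φ b' := aux_phi_mono hΦ
  have hΦpos : ∀ n, 0 < Φ n := aux_phi_pos hφpos hΦ
  have hcge : ∀ j, 1 ≤ j → 1 ≤ c j := aux_cge1 hm ht0 hmono hb hε hΦpos hΦm hc1 hc2 hcrec
  have hcpos : ∀ j, 1 ≤ j → (0:ℝ) < c j := fun j hj => lt_of_lt_of_le zero_lt_one (hcge j hj)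
  have hApos : ∀ k, 1 ≤ k → (0:ℝ) < ∏ i ∈ Finset.range m, c (k + i) ^ t i := by
    intro k hk
    apply Finset.prod_pos
    intro i hi
    exact Real.rpow_pos_of_pos (hcpos (k + i) (by omega)) _
  have hPnn : ∀ M : ℕ, (0:ℝ) ≤ ∏ i ∈ Finset.Icc 1 M, c i := by
    intro M
    apply Finset.prod_nonneg
    intro i hi
    simp only [Finset.mem_Icc] at hi
    exact le_trans zero_le_one (hcge i hi.1)
  have hBnn : ∀ nn : ℕ, (0:ℝ) ≤ (∏ i ∈ Finset.Icc 1 (nn + m - 1), c i) ^ (t m * (b + ε - 1)) :=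
    fun nn => Real.rpow_nonneg (hPnn _) _
  -- the central frequently statement (with both useful forms)
  have hmain : ∀ N, ∃ k, N ≤ k ∧ 1 ≤ k ∧
      c (k + m) ^ t m = Real.exp (φ k) / ∏ i ∈ Finset.range m, c (k + i) ^ t i := by
    intro N
    obtain ⟨f, hfN, hfm, hFf⟩ :=
      aux_first_freq hm ht0 hmono hφpos hb hε hlogb hΦ hcge hc2 hcrec N
    obtain ⟨k, hfk, hΦfeq⟩ := (hΦ f).1
    obtain ⟨d, rfl⟩ : ∃ d, k = f + d := ⟨k - f, by omega⟩
    have hconst : ∀ j, f ≤ j → j ≤ f + d → Φ j = Φ f := by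
      intro j h1 h2
      apply le_antisymm _ (hΦm f j h1)
      calc Φ j ≤ Φ (f + d) := hΦm j (f + d) h2
        _ ≤ φ (f + d) := hΦφ _
        _ = Φ f := hΦfeq.symm
    have hpers : ∀ e, e ≤ d →
        Real.exp (Φ (f + e)) / (∏ i ∈ Finset.range m, c (f + e + i) ^ t i)
          ≤ (∏ i ∈ Finset.Icc 1 (f + e + m - 1), c i) ^ (t m * (b + ε - 1)) := by
      intro e he
      induction e with
      | zero => simpa using hFf
      | succ e ih =>
        have hΦeq : Φ (f + e + 1) = Φ (f + e) := by
          rw [hconst (f + e + 1) (by omega) (by omega), hconst (f + e) (by omega) (by omega)]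
        have hprev := ih (by omega)
        have := aux_persist hm ht0 hmono hb hε hcge hcrec (f + e) (by omega) hΦeq hprev
        have e1 : f + (e + 1) = f + e + 1 := by omega
        rw [e1]
        exact this
    have hFk := hpers d le_rfl
    have hck : c ((f + d) + m) ^ t m
        = Real.exp (Φ (f + d)) / ∏ i ∈ Finset.range m, c ((f + d) + i) ^ t i := by
      rw [aux_cpow htm hcrec (f + d) (by omega) (hApos (f + d) (by omega)) (hBnn (f + d))]
      exact min_eq_left hFk
    have hΦk : Φ (f + d) = φ (f + d) := by
      rw [hconst (f + d) (by omega) le_rfl, hΦfeq]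
    exact ⟨f + d, by omega, by omega, by rw [hck, hΦk]⟩
  constructor
  · -- first conjunct
    rw [Filter.frequently_atTop]
    intro N
    obtain ⟨k, h1, _, h3⟩ := hmain N
    exact ⟨k, h1, h3⟩
  · -- second conjunct: limsup = 1
    have hup : ∀ᶠ n : ℕ in atTop,
        ((Real.log (∏ i ∈ Finset.range (m + 1), c (n + i) ^ t i) / φ n : ℝ) : EReal)
          ≤ (1 : EReal) := by
      rw [Filter.eventually_atTop]
      refine ⟨2, fun n hn => ?_⟩
      have hprod : (∏ i ∈ Finset.range (m + 1), c (n + i) ^ t i)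
          = (∏ i ∈ Finset.range m, c (n + i) ^ t i) * c (n + m) ^ t m :=
        Finset.prod_range_succ _ _
      have hle : (∏ i ∈ Finset.range m, c (n + i) ^ t i) * c (n + m) ^ t m
          ≤ Real.exp (φ n) := by
        have h1 : c (n + m) ^ t m
            ≤ Real.exp (Φ n) / ∏ i ∈ Finset.range m, c (n + i) ^ t i := by
          rw [aux_cpow htm hcrec n (by omega) (hApos n (by omega)) (hBnn n)]
          exact min_le_left _ _
        calc (∏ i ∈ Finset.range m, c (n + i) ^ t i) * c (n + m) ^ t m
            ≤ (∏ i ∈ Finset.range m, c (n + i) ^ t i)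
              * (Real.exp (Φ n) / ∏ i ∈ Finset.range m, c (n + i) ^ t i) :=
              mul_le_mul_of_nonneg_left h1 (le_of_lt (hApos n (by omega)))
          _ = Real.exp (Φ n) := by
              rw [mul_div_assoc']
              exact mul_div_cancel_left₀ _ (ne_of_gt (hApos n (by omega)))
          _ ≤ Real.exp (φ n) := Real.exp_le_exp.mpr (hΦφ n)
      have hppos : (0:ℝ) < ∏ i ∈ Finset.range (m + 1), c (n + i) ^ t i := by
        rw [hprod]
        exact mul_pos (hApos n (by omega)) (Real.rpow_pos_of_pos (hcpos (n + m) (by omega)) _)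
      have hratio : Real.log (∏ i ∈ Finset.range (m + 1), c (n + i) ^ t i) / φ n ≤ 1 := by
        rw [div_le_one (hφpos n)]
        calc Real.log (∏ i ∈ Finset.range (m + 1), c (n + i) ^ t i)
            ≤ Real.log (Real.exp (φ n)) := by
              apply Real.log_le_log hppos
              rw [hprod]
              exact hle
          _ = φ n := Real.log_exp _
      exact_mod_cast EReal.coe_le_coe_iff.mpr hratio
    have hlow : ∃ᶠ n : ℕ in atTop, (1 : EReal)
        ≤ ((Real.log (∏ i ∈ Finset.range (m + 1), c (n + i) ^ t i) / φ n : ℝ) : EReal) := by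
      rw [Filter.frequently_atTop]
      intro N
      obtain ⟨k, h1, h2, h3⟩ := hmain N
      refine ⟨k, h1, ?_⟩
      have hprod : (∏ i ∈ Finset.range (m + 1), c (k + i) ^ t i)
          = (∏ i ∈ Finset.range m, c (k + i) ^ t i) * c (k + m) ^ t m :=
        Finset.prod_range_succ _ _
      have heq : (∏ i ∈ Finset.range (m + 1), c (k + i) ^ t i) = Real.exp (φ k) := by
        rw [hprod, h3, mul_div_assoc']
        exact mul_div_cancel_left₀ _ (ne_of_gt (hApos k h2))
      have : Real.log (∏ i ∈ Finset.range (m + 1), c (k + i) ^ t i) / φ k = 1 := by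
        rw [heq, Real.log_exp]
        exact div_self (ne_of_gt (hφpos k))
      rw [this]
      exact le_rfl
    apply le_antisymm
    · exact Filter.limsup_le_of_le (by isBoundedDefault) hup
    · exact Filter.le_limsup_of_frequently_le hlow (by isBoundedDefault)
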